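/- Let G = (V,E) be a locally finite directed graph and let ā, b̄ be finite tuples from V of equal length with ā ≡² b̄. Then for every n there is a bijection between the n-neighbourhoods B_n(ā) and B_n(b̄) which sends ā to b̄ (componentwise) and preserves the relation E in both directions. -/

import Mathlib

namespace AutoStruct

/-! ### Regular languages, convolutions, regular relations -/

/-- A language is regular if it is accepted by a DFA with finitely many states. -/
def IsRegularLang {α : Type} (L : Set (List α)) : Prop :=
  ∃ (σ : Type) (_ : Fintype σ) (M : DFA α σ), M.accepts = L

/-- Convolution of a pair of words, using `none` as the padding symbol `◇`. -/
def conv2 {α : Type} (u v : List α) : List (Option α × Option α) :=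
  (List.range (max u.length v.length)).map fun k => (u[k]?, v[k]?)

/-- Convolution of an `n`-tuple of words, using `none` as the padding symbol `◇`. -/
def conv {α : Type} {n : ℕ} (w : Fin n → List α) : List (Fin n → Option α) :=
  (List.range (Finset.univ.sup fun i => (w i).length)).map fun k i => (w i)[k]?

/-- A binary relation on words is regular if the language of convolutions of its pairs
is regular. -/
def IsRegularRel2 {α : Type} (r : List α → List α → Prop) : Prop :=
  IsRegularLang {w | ∃ u v, r u v ∧ w = conv2 u v}

/-- An `n`-ary relation on words is regular if the language of convolutions of its tuples
is regular. -/
def IsRegularRel {α : Type} {n : ℕ} (R : (Fin n → List α) → Prop) : Prop :=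
  IsRegularLang {w | ∃ t, R t ∧ w = conv t}

/-! ### Ordinal heights of well-founded relations -/

/-- The rank `r_A(x) = sup { r_A(y) + 1 : (y,x) ∈ R }` of an element of a well-founded
relation. -/
noncomputable def wfRank {β : Type} {r : β → β → Prop} (h : WellFounded r) (x : β) :
    Ordinal :=
  (h.apply x).rank

/-- The ordinal height `r(A) = sup { r_A(x) : x ∈ A }` of a well-founded relation. -/
noncomputable def relHeight {β : Type} {r : β → β → Prop} (h : WellFounded r) : Ordinal :=
  ⨆ x, wfRank h x

/-! ### Computable ordinals -/

/-- An ordinal is computable if it is the order type of a computable (decidable) well-ordering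
of (a decidable set of) natural numbers. -/
def IsComputableOrdinal (α : Ordinal) : Prop :=
  ∃ (A : Set ℕ) (r : ℕ → ℕ → Prop) (_ : ComputablePred fun n => n ∈ A)
    (_ : ComputablePred fun p : ℕ × ℕ => r p.1 p.2)
    (hwo : IsWellOrder {n // n ∈ A} fun x y => r x.1 y.1),
    @Ordinal.type _ _ hwo = α

/-- `ω₁^CK`, the least non-computable ordinal. -/
noncomputable def omega1CK : Ordinal :=
  sInf {α | ¬ IsComputableOrdinal α}

/-! ### Scott rank machinery for relational structures -/

section ScottRank

variable {D : Type}

/-- Atomic (quantifier-free) equivalence of two tuples in a relational structure with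
relations `rel i` of arity `ar i`: the tuples satisfy the same quantifier-free formulas. -/
def atomEquiv {ν : ℕ} {ar : Fin ν → ℕ} (rel : (i : Fin ν) → (Fin (ar i) → D) → Prop)
    {k : ℕ} (a b : Fin k → D) : Prop :=
  (∀ i j, a i = a j ↔ b i = b j) ∧
  ∀ (i : Fin ν) (f : Fin (ar i) → Fin k), rel i (a ∘ f) ↔ rel i (b ∘ f)

/-- The back-and-forth equivalence relations `ā ≡^α b̄` on tuples of a relational
structure. -/
noncomputable def bfEquiv {ν : ℕ} {ar : Fin ν → ℕ}
    (rel : (i : Fin ν) → (Fin (ar i) → D) → Prop)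
    (α : Ordinal) (k : ℕ) (a b : Fin k → D) : Prop :=
  if α = 0 then atomEquiv rel a b
  else ∀ β < α,
    (∀ (l : ℕ) (c : Fin l → D), ∃ d : Fin l → D,
      bfEquiv rel β (k + l) (Fin.append a c) (Fin.append b d)) ∧
    (∀ (l : ℕ) (d : Fin l → D), ∃ c : Fin l → D,
      bfEquiv rel β (k + l) (Fin.append a c) (Fin.append b d))
termination_by α
decreasing_by all_goals assumption

/-- An automorphism of a relational structure. -/
def IsAutomorphism {ν : ℕ} {ar : Fin ν → ℕ} (rel : (i : Fin ν) → (Fin (ar i) → D) → Prop)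
    (g : D ≃ D) : Prop :=
  ∀ (i : Fin ν) (t : Fin (ar i) → D), rel i t ↔ rel i fun j => g (t j)

/-- The Scott rank of a tuple: the least `β` such that `≡^β`-equivalence to the tuple implies
being in the same automorphism orbit. -/
noncomputable def tupleSR {ν : ℕ} {ar : Fin ν → ℕ}
    (rel : (i : Fin ν) → (Fin (ar i) → D) → Prop) {k : ℕ} (a : Fin k → D) : Ordinal :=
  sInf {β | ∀ b : Fin k → D, bfEquiv rel β k a b →
    ∃ g : D ≃ D, IsAutomorphism rel g ∧ ∀ i, g (a i) = b i}

/-- The Scott rank of a relational structure: the least ordinal greater than the Scott ranks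
of all finite tuples. -/
noncomputable def scottRank {ν : ℕ} {ar : Fin ν → ℕ}
    (rel : (i : Fin ν) → (Fin (ar i) → D) → Prop) : Ordinal :=
  sInf {γ | ∀ (k : ℕ) (a : Fin k → D), tupleSR rel a < γ}

end ScottRank

/-! ### Word structures: automatic and computable structures -/

/-- A structure `(A; R₁, …, R_ν)` whose domain is a set of words over the alphabet `α`,
with `ν` relations, the `i`-th of arity `ar i`. -/
structure WordStructure (α : Type) (ν : ℕ) (ar : Fin ν → ℕ) where
  dom : Set (List α)
  rel : (i : Fin ν) → (Fin (ar i) → List α) → Prop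
  rel_dom : ∀ i t, rel i t → ∀ j, t j ∈ dom

/-- The relations of a word structure, restricted to (the subtype of) its domain. -/
def WordStructure.relOn {α : Type} {ν : ℕ} {ar : Fin ν → ℕ} (S : WordStructure α ν ar) :
    (i : Fin ν) → (Fin (ar i) → ↥S.dom) → Prop :=
  fun i t => S.rel i fun j => ↑(t j)

/-- A word structure is automatic if its domain is a regular language and all its relations
are regular. -/
def WordStructure.IsAutomatic {α : Type} {ν : ℕ} {ar : Fin ν → ℕ}
    (S : WordStructure α ν ar) : Prop :=
  IsRegularLang S.dom ∧ ∀ i, IsRegularRel (S.rel i)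

/-- A word structure is computable if its domain and all its relations are computable. -/
def WordStructure.IsComputableStr {α : Type} [Primcodable α] {ν : ℕ} {ar : Fin ν → ℕ}
    (S : WordStructure α ν ar) : Prop :=
  ComputablePred (fun w : List α => w ∈ S.dom) ∧
    ∀ i, ComputablePred fun t : Fin (ar i) → List α => S.rel i t

/-- The Scott rank of a word structure. -/
noncomputable def WordStructure.SR {α : Type} {ν : ℕ} {ar : Fin ν → ℕ}
    (S : WordStructure α ν ar) : Ordinal :=
  scottRank S.relOn

/-! ### Abstract relational structures, isomorphism, ω-fold disjoint union -/

/-- An abstract relational structure with `ν` relations of arities `ar`. -/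
structure RelStruct (ν : ℕ) (ar : Fin ν → ℕ) where
  carrier : Type
  rel : (i : Fin ν) → (Fin (ar i) → carrier) → Prop

/-- The abstract relational structure underlying a word structure. -/
def WordStructure.toRelStruct {α : Type} {ν : ℕ} {ar : Fin ν → ℕ}
    (S : WordStructure α ν ar) : RelStruct ν ar :=
  ⟨↥S.dom, S.relOn⟩

/-- Isomorphism of abstract relational structures. -/
def RelStruct.Iso {ν : ℕ} {ar : Fin ν → ℕ} (S T : RelStruct ν ar) : Prop :=
  ∃ g : S.carrier ≃ T.carrier, ∀ i t, S.rel i t ↔ T.rel i fun j => g (t j)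

/-- The ω-fold disjoint union of an abstract relational structure: countably many disjoint
copies, a relation holding of a tuple iff all components lie in the same copy and the
corresponding tuple satisfies the relation in the original structure. -/
def omegaFold {ν : ℕ} {ar : Fin ν → ℕ} (S : RelStruct ν ar) : RelStruct ν ar :=
  ⟨S.carrier × ℕ, fun i t => (∀ j j', (t j).2 = (t j').2) ∧ S.rel i fun j => (t j).1⟩

/-! ### Trees and Cantor–Bendixson rank -/

/-- `(T, le)` is a partial order tree: `le` is a partial order with a least element in which
every set `{x : x ≤ y}` is finite and linearly ordered. -/
def IsPOTree {T : Type} (le : T → T → Prop) : Prop :=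
  (∀ x, le x x) ∧ (∀ x y z, le x y → le y z → le x z) ∧
  (∀ x y, le x y → le y x → x = y) ∧
  (∃ r, ∀ x, le r x) ∧
  (∀ y, {x | le x y}.Finite ∧ ∀ x z, le x y → le z y → le x z ∨ le z x)

/-- `(T, S)` is a successor tree: the reflexive–transitive closure of `S` is a partial order
tree. -/
def IsSuccTree {T : Type} (S : T → T → Prop) : Prop :=
  IsPOTree (Relation.ReflTransGen S)

/-- The derivative of (a subset of) a successor tree: the set of nodes lying on at least two
distinct infinite paths within the subset. -/
def treeDeriv {T : Type} (S : T → T → Prop) (X : Set T) : Set T :=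
  {x ∈ X | ∃ p q : ℕ → T, p 0 = x ∧ q 0 = x ∧ (∀ n, p n ∈ X) ∧ (∀ n, q n ∈ X) ∧
    (∀ n, S (p n) (p (n + 1))) ∧ (∀ n, S (q n) (q (n + 1))) ∧ p ≠ q}

/-- The transfinite iteration of the tree derivative, starting from the whole tree. -/
noncomputable def treeDerivIter {T : Type} (S : T → T → Prop) (α : Ordinal) : Set T :=
  Ordinal.limitRecOn α Set.univ (fun _ X => treeDeriv S X)
    (fun o _ ih => ⋂ (β : Ordinal) (h : β < o), ih β h)

/-- The Cantor–Bendixson rank of a successor tree: the least `α` such that the `α`-th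
derivative equals the `α+1`-st derivative. -/
noncomputable def CBrank {T : Type} (S : T → T → Prop) : Ordinal :=
  sInf {α | treeDerivIter S (α + 1) = treeDerivIter S α}

/-- The derivative of (a subset of) a partial order tree: the set of nodes lying on at least
two distinct infinite paths (i.e. admitting two eventually incomparable infinite strictly
increasing chains) within the subset. -/
def poDeriv {T : Type} (le : T → T → Prop) (X : Set T) : Set T :=
  {x ∈ X | ∃ p q : ℕ → T, p 0 = x ∧ q 0 = x ∧ (∀ n, p n ∈ X) ∧ (∀ n, q n ∈ X) ∧
    (∀ n, le (p n) (p (n + 1)) ∧ p n ≠ p (n + 1)) ∧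
    (∀ n, le (q n) (q (n + 1)) ∧ q n ≠ q (n + 1)) ∧
    ∃ n m, ¬ le (p n) (q m) ∧ ¬ le (q m) (p n)}

noncomputable def poDerivIter {T : Type} (le : T → T → Prop) (α : Ordinal) : Set T :=
  Ordinal.limitRecOn α Set.univ (fun _ X => poDeriv le X)
    (fun o _ ih => ⋂ (β : Ordinal) (h : β < o), ih β h)

/-- The Cantor–Bendixson rank of a partial order tree. -/
noncomputable def CBrankPO {T : Type} (le : T → T → Prop) : Ordinal :=
  sInf {α | poDerivIter le (α + 1) = poDerivIter le α}

/-- The product of two successor trees, where `r₂` is the root of the second tree. -/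
def prodSucc {T₁ T₂ : Type} (S₁ : T₁ → T₁ → Prop) (S₂ : T₂ → T₂ → Prop) (r₂ : T₂) :
    T₁ × T₂ → T₁ × T₂ → Prop :=
  fun p q =>
    (p.2 = r₂ ∧ ((q.1 = p.1 ∧ S₂ p.2 q.2) ∨ (S₁ p.1 q.1 ∧ p.2 = q.2))) ∨
    (p.2 ≠ r₂ ∧ q.1 = p.1 ∧ S₂ p.2 q.2)

/-! ### Locally finite graphs -/

/-- A directed graph is locally finite if every vertex has finitely many neighbours
(in either direction). -/
def LocallyFiniteGraph {V : Type} (E : V → V → Prop) : Prop :=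
  ∀ x, {y | E x y ∨ E y x}.Finite

/-- A graph as a relational structure with one binary relation. -/
def graphRel {V : Type} (E : V → V → Prop) : (i : Fin 1) → (Fin 2 → V) → Prop :=
  fun _ t => E (t 0) (t 1)

/-- `ball E U n` is the `n`-neighbourhood of `U`: vertices reachable from `U` by `n` or fewer
edges (traversed in either direction). -/
def ball {V : Type} (E : V → V → Prop) (U : Set V) : ℕ → Set V
  | 0 => U
  | n + 1 => ball E U n ∪ {v | ∃ u ∈ ball E U n, E u v ∨ E v u}

/-- Connectivity with respect to the symmetrization of `E`. -/
def conn {V : Type} (E : V → V → Prop) : V → V → Prop :=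
  Relation.ReflTransGen fun u v => E u v ∨ E v u

lemma ball_subset_succ {V : Type} (E : V → V → Prop) (U : Set V) (p : ℕ) :
    ball E U p ⊆ ball E U (p + 1) :=
  Set.subset_union_left

lemma ball_mono {V : Type} (E : V → V → Prop) (U : Set V) {p q : ℕ} (h : p ≤ q) :
    ball E U p ⊆ ball E U q := by
  induction q with
  | zero => simp [Nat.le_zero.mp h]
  | succ q ih =>
    rcases Nat.lt_or_ge p (q + 1) with h' | h'
    · exact (ih (Nat.lt_succ_iff.mp h')).trans (ball_subset_succ E U q)
    · have : p = q + 1 := le_antisymm h h'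
      subst this; exact Set.Subset.rfl

lemma ball_finite {V : Type} {E : V → V → Prop} (hlf : LocallyFiniteGraph E) {U : Set V}
    (hU : U.Finite) : ∀ n, (ball E U n).Finite
  | 0 => hU
  | n + 1 => by
    have h1 := ball_finite hlf hU n
    have h2 : ({v | ∃ u ∈ ball E U n, E u v ∨ E v u} : Set V).Finite := by
      refine Set.Finite.subset (h1.biUnion fun u _ => hlf u) ?_
      rintro v ⟨u, hu, h⟩
      exact Set.mem_biUnion hu h
    exact h1.union h2

lemma exists_enum {V : Type} {S : Set V} (h : S.Finite) :
    ∃ (l : ℕ) (c : Fin l → V), Set.range c = S := by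
  classical
  obtain ⟨s, rfl⟩ : ∃ s : Finset V, ↑s = S := ⟨h.toFinset, h.coe_toFinset⟩
  refine ⟨s.card, fun i => (s.equivFin.symm i : V), ?_⟩
  ext x
  constructor
  · rintro ⟨i, rfl⟩; exact (s.equivFin.symm i).2
  · intro hx; exact ⟨s.equivFin ⟨x, hx⟩, by simp⟩

/-- **Lemma 10.** In a locally finite directed graph, if `ā ≡² b̄` then for every `n` there is
a bijection of the `n`-neighbourhoods of `ā` and `b̄` sending `ā` to `b̄` and respecting the
edge relation in both directions. -/
theorem neighbourhood_bijection_of_equiv_two {V : Type} (E : V → V → Prop)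
    (hlf : LocallyFiniteGraph E) {k : ℕ} (a b : Fin k → V)
    (hab : bfEquiv (graphRel E) 2 k a b) (n : ℕ) :
    ∃ g : ↥(ball E (Set.range a) n) ≃ ↥(ball E (Set.range b) n),
      (∀ x y : ↥(ball E (Set.range a) n), E ↑x ↑y ↔ E ↑(g x) ↑(g y)) ∧
      ∀ (x : ↥(ball E (Set.range a) n)) (i : Fin k), (x : V) = a i → (↑(g x) : V) = b i := by
  classical
  obtain ⟨l, c, hc⟩ := exists_enum (ball_finite hlf (Set.finite_range a) n)
  obtain ⟨m, e, he⟩ := exists_enum (ball_finite hlf (Set.finite_range b) n)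
  rw [bfEquiv, if_neg (by norm_num)] at hab
  obtain ⟨d, hd⟩ := (hab 1 (by norm_num)).1 l c
  rw [bfEquiv, if_neg (by norm_num)] at hd
  obtain ⟨f, hf⟩ := (hd 0 (by norm_num)).2 m e
  rw [bfEquiv, if_pos rfl] at hf
  obtain ⟨heq, hrel⟩ := hf
  set t : Fin (k + l + m) → V := Fin.append (Fin.append a c) f with ht
  set s : Fin (k + l + m) → V := Fin.append (Fin.append b d) e with hs
  have hE : ∀ i j, E (t i) (t j) ↔ E (s i) (s j) := by
    intro i j
    have := hrel 0 ![i, j]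
    simpa [graphRel, Function.comp] using this
  have hta : ∀ i : Fin k, t (Fin.castAdd m (Fin.castAdd l i)) = a i := by
    intro i; simp [ht, Fin.append_left]
  have htc : ∀ j : Fin l, t (Fin.castAdd m (Fin.natAdd k j)) = c j := by
    intro j; simp [ht, Fin.append_left, Fin.append_right]
  have hsb : ∀ i : Fin k, s (Fin.castAdd m (Fin.castAdd l i)) = b i := by
    intro i; simp [hs, Fin.append_left]
  have hsd : ∀ j : Fin l, s (Fin.castAdd m (Fin.natAdd k j)) = d j := by
    intro j; simp [hs, Fin.append_left, Fin.append_right]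
  have hse : ∀ j : Fin m, s (Fin.natAdd (k + l) j) = e j := by
    intro j; simp [hs, Fin.append_right]
  have htf : ∀ j : Fin m, t (Fin.natAdd (k + l) j) = f j := by
    intro j; simp [ht, Fin.append_right]
  -- Claim A : forward membership transfer
  have claimA : ∀ p, p ≤ n → ∀ i, t i ∈ ball E (Set.range a) p →
      s i ∈ ball E (Set.range b) p := by
    intro p
    induction p with
    | zero =>
      intro _ i hi
      obtain ⟨j, hj⟩ := hi
      have h1 : t (Fin.castAdd m (Fin.castAdd l j)) = t i := by rw [hta]; exact hj
      have h2 := (heq _ i).mp h1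
      rw [hsb] at h2
      exact ⟨j, h2⟩
    | succ p ih =>
      intro hpn i hi
      have hpn' : p ≤ n := Nat.le_of_succ_le hpn
      rcases hi with hi | ⟨u, hu, hedge⟩
      · exact ball_subset_succ _ _ _ (ih hpn' i hi)
      · have hu' : u ∈ Set.range c := by
          rw [hc]; exact ball_mono E _ hpn' hu
        obtain ⟨j, hj⟩ := hu'
        have htj : t (Fin.castAdd m (Fin.natAdd k j)) = u := by rw [htc]; exact hj
        have humem : t (Fin.castAdd m (Fin.natAdd k j)) ∈ ball E (Set.range a) p := by
          rw [htj]; exact hu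
        have hsj := ih hpn' _ humem
        refine Set.mem_union_right _ ⟨s (Fin.castAdd m (Fin.natAdd k j)), hsj, ?_⟩
        rcases hedge with h1 | h1
        · have h1' : E (t (Fin.castAdd m (Fin.natAdd k j))) (t i) := by rw [htj]; exact h1
          exact Or.inl ((hE _ i).mp h1')
        · have h1' : E (t i) (t (Fin.castAdd m (Fin.natAdd k j))) := by rw [htj]; exact h1
          exact Or.inr ((hE i _).mp h1')
  -- Claim B : backward membership transfer
  have claimB : ∀ p, p ≤ n → ∀ i, s i ∈ ball E (Set.range b) p →
      t i ∈ ball E (Set.range a) p := by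
    intro p
    induction p with
    | zero =>
      intro _ i hi
      obtain ⟨j, hj⟩ := hi
      have h1 : s (Fin.castAdd m (Fin.castAdd l j)) = s i := by rw [hsb]; exact hj
      have h2 := (heq _ i).mpr h1
      rw [hta] at h2
      exact ⟨j, h2⟩
    | succ p ih =>
      intro hpn i hi
      have hpn' : p ≤ n := Nat.le_of_succ_le hpn
      rcases hi with hi | ⟨u, hu, hedge⟩
      · exact ball_subset_succ _ _ _ (ih hpn' i hi)
      · have hu' : u ∈ Set.range e := by
          rw [he]; exact ball_mono E _ hpn' hu
        obtain ⟨j, hj⟩ := hu'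
        have hsj' : s (Fin.natAdd (k + l) j) = u := by rw [hse]; exact hj
        have humem : s (Fin.natAdd (k + l) j) ∈ ball E (Set.range b) p := by
          rw [hsj']; exact hu
        have htj := ih hpn' _ humem
        refine Set.mem_union_right _ ⟨t (Fin.natAdd (k + l) j), htj, ?_⟩
        rcases hedge with h1 | h1
        · have h1' : E (s (Fin.natAdd (k + l) j)) (s i) := by rw [hsj']; exact h1
          exact Or.inl ((hE _ i).mpr h1')
        · have h1' : E (s i) (s (Fin.natAdd (k + l) j)) := by rw [hsj']; exact h1
          exact Or.inr ((hE i _).mpr h1')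
  -- choose indices
  have hmemA : ∀ x : ↥(ball E (Set.range a) n), ∃ i, t i = ↑x := by
    intro x
    have : (x : V) ∈ Set.range c := by rw [hc]; exact x.2
    obtain ⟨j, hj⟩ := this
    exact ⟨Fin.castAdd m (Fin.natAdd k j), by rw [htc]; exact hj⟩
  have hmemB : ∀ y : ↥(ball E (Set.range b) n), ∃ i, s i = ↑y := by
    intro y
    have : (y : V) ∈ Set.range e := by rw [he]; exact y.2
    obtain ⟨j, hj⟩ := this
    exact ⟨Fin.natAdd (k + l) j, by rw [hse]; exact hj⟩
  choose idxA hidxA using hmemA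
  choose idxB hidxB using hmemB
  have hFmem : ∀ x : ↥(ball E (Set.range a) n), s (idxA x) ∈ ball E (Set.range b) n := by
    intro x
    exact claimA n le_rfl _ (by rw [hidxA]; exact x.2)
  have hGmem : ∀ y : ↥(ball E (Set.range b) n), t (idxB y) ∈ ball E (Set.range a) n := by
    intro y
    exact claimB n le_rfl _ (by rw [hidxB]; exact y.2)
  refine ⟨⟨fun x => ⟨s (idxA x), hFmem x⟩, fun y => ⟨t (idxB y), hGmem y⟩, ?_, ?_⟩, ?_, ?_⟩
  · intro x
    apply Subtype.ext
    have h1 : s (idxB ⟨s (idxA x), hFmem x⟩) = s (idxA x) := hidxB _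
    have h2 := (heq _ _).mpr h1
    calc t (idxB ⟨s (idxA x), hFmem x⟩) = t (idxA x) := h2
    _ = ↑x := hidxA x
  · intro y
    apply Subtype.ext
    have h1 : t (idxA ⟨t (idxB y), hGmem y⟩) = t (idxB y) := hidxA _
    have h2 := (heq _ _).mp h1
    calc s (idxA ⟨t (idxB y), hGmem y⟩) = s (idxB y) := h2
    _ = ↑y := hidxB y
  · intro x y
    rw [← hidxA x, ← hidxA y]
    exact hE _ _
  · intro x i hxi
    have h1 : t (idxA x) = t (Fin.castAdd m (Fin.castAdd l i)) := by
      rw [hidxA, hxi, hta]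
    have h2 := (heq _ _).mp h1
    show s (idxA x) = b i
    rw [h2, hsb]

end AutoStruct
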